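/- Let Z, Z' be real vector spaces with dim Z ≥ 2. If Q : Z → Z' is a bijection mapping segments onto segments, then Q is affine. -/

import Mathlib

open Set AffineMap

section SPBAHelpers

variable {E F : Type*} [AddCommGroup E] [Module ℝ E] [AddCommGroup F] [Module ℝ F]

private lemma SPBA.col_sub_pair {a b : E} {s : Set E} (h : s ⊆ {a, b}) :
    Collinear ℝ s :=
  (collinear_pair ℝ a b).subset h

private lemma SPBA.col_of_param {a b x : E} {t : ℝ} (h : x = a + t • (b - a)) :
    Collinear ℝ ({a, b, x} : Set E) := by
  rw [collinear_iff_of_mem (Set.mem_insert a {b, x})]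
  refine ⟨b - a, ?_⟩
  rintro p hp
  simp only [Set.mem_insert_iff, Set.mem_singleton_iff] at hp
  rcases hp with rfl | rfl | rfl
  exacts [⟨0, by simp⟩, ⟨1, by simp⟩, ⟨t, by simp [h, vadd_eq_add]; abel⟩]

private lemma SPBA.param_of_col {a b x : E} (hab : a ≠ b)
    (h : Collinear ℝ ({a, b, x} : Set E)) : ∃ t : ℝ, x = a + t • (b - a) := by
  rw [collinear_iff_of_mem (Set.mem_insert a {b, x})] at h
  obtain ⟨v, hv⟩ := h
  obtain ⟨s, hs⟩ := hv b (by simp)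
  obtain ⟨u, hu⟩ := hv x (by simp)
  have hs0 : s ≠ 0 := by
    rintro rfl
    simp only [zero_smul, zero_vadd] at hs
    exact hab hs.symm
  refine ⟨u / s, ?_⟩
  rw [hu, hs]
  simp only [vadd_eq_add, add_sub_cancel_right, smul_smul, div_mul_cancel₀ u hs0]
  abel

private lemma SPBA.indep {a b c : E} (h : ¬ Collinear ℝ ({a, b, c} : Set E)) {μ ν : ℝ}
    (hzero : μ • (b - a) + ν • (c - a) = 0) : μ = 0 ∧ ν = 0 := by
  by_cases hμ : μ = 0
  · subst hμ
    refine ⟨rfl, ?_⟩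
    by_contra hν
    rw [zero_smul, zero_add, smul_eq_zero] at hzero
    rcases hzero with h' | h'
    · exact hν h'
    · have hca : c = a := by rwa [sub_eq_zero] at h'
      exact h (SPBA.col_sub_pair (a := a) (b := b) (by
        intro x hx
        simp only [Set.mem_insert_iff, Set.mem_singleton_iff] at hx ⊢
        rcases hx with rfl | rfl | rfl
        · exact Or.inl rfl
        · exact Or.inr rfl
        · exact Or.inl hca))
  · exfalso
    apply h
    have h2 : μ • (b - a) = (-ν) • (c - a) := by
      rw [neg_smul, eq_neg_iff_add_eq_zero]
      exact hzero
    have h3 : b - a = ((-ν) / μ) • (c - a) := by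
      apply smul_right_injective E hμ
      show μ • (b - a) = μ • (((-ν) / μ) • (c - a))
      rw [smul_smul]
      have hmul : μ * (-ν / μ) = -ν := by field_simp
      rw [hmul]
      exact h2
    have hb : b = a + ((-ν) / μ) • (c - a) := by
      rw [← h3]; abel
    have hcol := SPBA.col_of_param hb  -- Collinear {a, c, b}
    have hset : ({a, c, b} : Set E) = {a, b, c} := by
      ext x
      simp only [Set.mem_insert_iff, Set.mem_singleton_iff]
      tauto
    rwa [hset] at hcol

private lemma SPBA.exists_noncol (hdim : 2 ≤ Module.rank ℝ E) {a b : E} (hab : a ≠ b) :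
    ∃ c, ¬ Collinear ℝ ({a, b, c} : Set E) := by
  by_contra hcon
  push_neg at hcon
  have hspan : ∀ z : E, z ∈ Submodule.span ℝ ({b - a} : Set E) := by
    intro z
    obtain ⟨t, ht⟩ := SPBA.param_of_col hab (hcon z)
    obtain ⟨t₀, ht₀⟩ := SPBA.param_of_col hab (hcon 0)
    have hz : z = (t - t₀) • (b - a) := by
      linear_combination (norm := module) ht + ht₀.symm
    rw [hz]
    exact Submodule.smul_mem _ _ (Submodule.mem_span_singleton_self _)
  have htop : Submodule.span ℝ ({b - a} : Set E) = ⊤ := Submodule.eq_top_iff'.2 hspan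
  have hrank := rank_span_le (R := ℝ) ({b - a} : Set E)
  rw [htop, rank_top] at hrank
  rw [Cardinal.mk_singleton] at hrank
  have h2 := hdim.trans hrank
  norm_num at h2

private lemma SPBA.sub_seg (a b : E) (s t : ℝ) :
    segment ℝ (lineMap a b s) (lineMap a b t) = lineMap a b '' uIcc s t := by
  rw [← image_segment ℝ (lineMap a b) s t, segment_eq_uIcc]

private lemma SPBA.seg_param {x y z : F} (h : z ∈ segment ℝ x y) :
    ∃ t : ℝ, z = x + t • (y - x) := by
  obtain ⟨p, q, hp, hq, hpq, rfl⟩ := h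
  refine ⟨q, ?_⟩
  have hp' : p = 1 - q := by linarith
  rw [hp']; module

private lemma SPBA.col_iff_seg (a b c : E) :
    Collinear ℝ ({a, b, c} : Set E) ↔
      (b ∈ segment ℝ a c ∨ c ∈ segment ℝ b a ∨ a ∈ segment ℝ c b) := by
  constructor
  · intro h
    rcases h.wbtw_or_wbtw_or_wbtw with h | h | h
    exacts [Or.inl h.mem_segment, Or.inr (Or.inl h.mem_segment),
      Or.inr (Or.inr h.mem_segment)]
  · rintro (h | h | h)
    · exact (mem_segment_iff_wbtw.1 h).collinear
    · have h2 := (mem_segment_iff_wbtw.1 h).collinear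
      have hset : ({b, c, a} : Set E) = {a, b, c} := by
        ext x
        simp only [Set.mem_insert_iff, Set.mem_singleton_iff]
        tauto
      rwa [hset] at h2
    · have h2 := (mem_segment_iff_wbtw.1 h).collinear
      have hset : ({c, a, b} : Set E) = {a, b, c} := by
        ext x
        simp only [Set.mem_insert_iff, Set.mem_singleton_iff]
        tauto
      rwa [hset] at h2

variable (Q : E → F)

private lemma SPBA.endpoint_aux (hQ : Function.Bijective Q)
    (hseg : ∀ z₁ z₂ : E, ∃ w₁ w₂ : F, Q '' segment ℝ z₁ z₂ = segment ℝ w₁ w₂)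
    {a b : E} (hab : a ≠ b) {w₁ w₂ : F}
    (hW : Q '' segment ℝ a b = segment ℝ w₁ w₂) : w₁ = Q a ∨ w₁ = Q b := by
  by_contra hcon
  push_neg at hcon
  have hQa : Q a ∈ segment ℝ w₁ w₂ := by
    rw [← hW]; exact mem_image_of_mem Q (left_mem_segment ℝ a b)
  have hQb : Q b ∈ segment ℝ w₁ w₂ := by
    rw [← hW]; exact mem_image_of_mem Q (right_mem_segment ℝ a b)
  have hw : w₁ ≠ w₂ := by
    rintro rfl
    rw [segment_same] at hQa hQb
    exact hab (hQ.injective (hQa.trans hQb.symm))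
  have hw1mem : w₁ ∈ Q '' segment ℝ a b := by
    rw [hW]; exact left_mem_segment ℝ w₁ w₂
  obtain ⟨p, hp, hQp⟩ := hw1mem
  rw [segment_eq_image_lineMap] at hp
  obtain ⟨τ, hτ, hpτ⟩ := hp
  have hLinj : Function.Injective (lineMap a b : ℝ → E) := lineMap_injective ℝ hab
  have hMinj : Function.Injective (lineMap w₁ w₂ : ℝ → F) := lineMap_injective ℝ hw
  have hsegap : segment ℝ a p = lineMap a b '' Icc 0 τ := by
    have h := SPBA.sub_seg a b 0 τ
    rwa [lineMap_apply_zero, hpτ, uIcc_of_le hτ.1] at h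
  have hsegpb : segment ℝ p b = lineMap a b '' Icc τ 1 := by
    have h := SPBA.sub_seg a b τ 1
    rwa [lineMap_apply_one, hpτ, uIcc_of_le hτ.2] at h
  have hUnion : Q '' segment ℝ a p ∪ Q '' segment ℝ p b = segment ℝ w₁ w₂ := by
    rw [← image_union, hsegap, hsegpb, ← image_union, Icc_union_Icc_eq_Icc hτ.1 hτ.2,
      ← segment_eq_image_lineMap, hW]
  have hInter : Q '' segment ℝ a p ∩ Q '' segment ℝ p b = {w₁} := by
    rw [← image_inter hQ.injective, hsegap, hsegpb, ← image_inter hLinj, Icc_inter_Icc,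
      sup_eq_right.2 hτ.1, inf_eq_left.2 hτ.2, Icc_self, image_singleton, image_singleton,
      hpτ, hQp]
  obtain ⟨u₁, u₂, hA⟩ := hseg a p
  obtain ⟨v₁, v₂, hB⟩ := hseg p b
  have hsubA0 : Q '' segment ℝ a p ⊆ segment ℝ w₁ w₂ := by
    rw [← hUnion]; exact subset_union_left
  have hsubB0 : Q '' segment ℝ p b ⊆ segment ℝ w₁ w₂ := by
    rw [← hUnion]; exact subset_union_right
  have hu₁ : u₁ ∈ segment ℝ w₁ w₂ := hsubA0 (by rw [hA]; exact left_mem_segment ℝ u₁ u₂)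
  have hu₂ : u₂ ∈ segment ℝ w₁ w₂ := hsubA0 (by rw [hA]; exact right_mem_segment ℝ u₁ u₂)
  have hv₁ : v₁ ∈ segment ℝ w₁ w₂ := hsubB0 (by rw [hB]; exact left_mem_segment ℝ v₁ v₂)
  have hv₂ : v₂ ∈ segment ℝ w₁ w₂ := hsubB0 (by rw [hB]; exact right_mem_segment ℝ v₁ v₂)
  rw [segment_eq_image_lineMap] at hu₁ hu₂ hv₁ hv₂
  obtain ⟨α₁, -, hα₁⟩ := hu₁
  obtain ⟨α₂, -, hα₂⟩ := hu₂
  obtain ⟨β₁, -, hβ₁⟩ := hv₁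
  obtain ⟨β₂, -, hβ₂⟩ := hv₂
  have hA' : Q '' segment ℝ a p = lineMap w₁ w₂ '' uIcc α₁ α₂ := by
    rw [hA, ← hα₁, ← hα₂, SPBA.sub_seg]
  have hB' : Q '' segment ℝ p b = lineMap w₁ w₂ '' uIcc β₁ β₂ := by
    rw [hB, ← hβ₁, ← hβ₂, SPBA.sub_seg]
  have hw1AB : w₁ ∈ Q '' segment ℝ a p ∩ Q '' segment ℝ p b := by
    rw [hInter]; exact rfl
  have h0A : (0 : ℝ) ∈ uIcc α₁ α₂ := by
    have h := hw1AB.1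
    rw [hA'] at h
    obtain ⟨γ, hγ, hγe⟩ := h
    have : γ = 0 := hMinj (by rw [hγe, lineMap_apply_zero])
    exact this ▸ hγ
  have h0B : (0 : ℝ) ∈ uIcc β₁ β₂ := by
    have h := hw1AB.2
    rw [hB'] at h
    obtain ⟨γ, hγ, hγe⟩ := h
    have : γ = 0 := hMinj (by rw [hγe, lineMap_apply_zero])
    exact this ▸ hγ
  have h1AB : (1 : ℝ) ∈ uIcc α₁ α₂ ∪ uIcc β₁ β₂ := by
    have hw2 : w₂ ∈ Q '' segment ℝ a p ∪ Q '' segment ℝ p b := by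
      rw [hUnion]; exact right_mem_segment ℝ w₁ w₂
    rw [hA', hB', ← image_union] at hw2
    obtain ⟨γ, hγ, hγe⟩ := hw2
    have : γ = 1 := hMinj (by rw [hγe, lineMap_apply_one])
    exact this ▸ hγ
  rcases h1AB with h1 | h1
  · have hsubA : segment ℝ w₁ w₂ ⊆ Q '' segment ℝ a p := by
      rw [segment_eq_image_lineMap, hA']
      exact image_mono (Set.ordConnected_uIcc.out h0A h1)
    have hbA : Q b ∈ Q '' segment ℝ a p := hsubA hQb
    have hbB : Q b ∈ Q '' segment ℝ p b := mem_image_of_mem Q (right_mem_segment ℝ p b)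
    have hQbw : Q b ∈ ({w₁} : Set F) := hInter ▸ mem_inter hbA hbB
    exact hcon.2 (mem_singleton_iff.1 hQbw).symm
  · have hsubB : segment ℝ w₁ w₂ ⊆ Q '' segment ℝ p b := by
      rw [segment_eq_image_lineMap, hB']
      exact image_mono (Set.ordConnected_uIcc.out h0B h1)
    have haB : Q a ∈ Q '' segment ℝ p b := hsubB hQa
    have haA : Q a ∈ Q '' segment ℝ a p := mem_image_of_mem Q (left_mem_segment ℝ a p)
    have hQaw : Q a ∈ ({w₁} : Set F) := hInter ▸ mem_inter haA haB
    exact hcon.1 (mem_singleton_iff.1 hQaw).symm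

private lemma SPBA.seg_image (hQ : Function.Bijective Q)
    (hseg : ∀ z₁ z₂ : E, ∃ w₁ w₂ : F, Q '' segment ℝ z₁ z₂ = segment ℝ w₁ w₂)
    (a b : E) : Q '' segment ℝ a b = segment ℝ (Q a) (Q b) := by
  rcases eq_or_ne a b with rfl | hab
  · rw [segment_same, segment_same, image_singleton]
  obtain ⟨w₁, w₂, hW⟩ := hseg a b
  have hW2 : Q '' segment ℝ a b = segment ℝ w₂ w₁ := by rw [hW, segment_symm]
  have h1 := SPBA.endpoint_aux Q hQ hseg hab hW
  have h2 := SPBA.endpoint_aux Q hQ hseg hab hW2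
  rcases h1 with rfl | rfl <;> rcases h2 with rfl | rfl
  · -- w₁ = Q a, w₂ = Q a
    have hb : Q b ∈ segment ℝ (Q a) (Q a) := by
      rw [← hW]; exact mem_image_of_mem Q (right_mem_segment ℝ a b)
    rw [segment_same] at hb
    exact absurd (hQ.injective (mem_singleton_iff.1 hb)).symm hab
  · rw [hW]
  · rw [hW2, segment_symm]
  · have ha : Q a ∈ segment ℝ (Q b) (Q b) := by
      rw [← hW]; exact mem_image_of_mem Q (left_mem_segment ℝ a b)
    rw [segment_same] at ha
    exact absurd (hQ.injective (mem_singleton_iff.1 ha)) hab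

private lemma SPBA.mem_seg_iff (hQ : Function.Bijective Q)
    (hseg : ∀ z₁ z₂ : E, ∃ w₁ w₂ : F, Q '' segment ℝ z₁ z₂ = segment ℝ w₁ w₂)
    {a b x : E} : x ∈ segment ℝ a b ↔ Q x ∈ segment ℝ (Q a) (Q b) := by
  constructor
  · intro h
    rw [← SPBA.seg_image Q hQ hseg]
    exact mem_image_of_mem Q h
  · intro h
    rw [← SPBA.seg_image Q hQ hseg] at h
    obtain ⟨y, hy, hyx⟩ := h
    rwa [← hQ.injective hyx]

private lemma SPBA.col_iff (hQ : Function.Bijective Q)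
    (hseg : ∀ z₁ z₂ : E, ∃ w₁ w₂ : F, Q '' segment ℝ z₁ z₂ = segment ℝ w₁ w₂)
    (a b c : E) :
    Collinear ℝ ({a, b, c} : Set E) ↔ Collinear ℝ ({Q a, Q b, Q c} : Set F) := by
  rw [SPBA.col_iff_seg a b c, SPBA.col_iff_seg (Q a) (Q b) (Q c),
    SPBA.mem_seg_iff Q hQ hseg, SPBA.mem_seg_iff Q hQ hseg, SPBA.mem_seg_iff Q hQ hseg]

private lemma SPBA.half_image (hdim : 2 ≤ Module.rank ℝ E)
    (hQ : Function.Bijective Q)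
    (hseg : ∀ z₁ z₂ : E, ∃ w₁ w₂ : F, Q '' segment ℝ z₁ z₂ = segment ℝ w₁ w₂)
    (a b : E) : Q ((1/2 : ℝ) • (a + b)) = (1/2 : ℝ) • (Q a + Q b) := by
  rcases eq_or_ne a b with rfl | hab
  · have h : (1/2 : ℝ) • (a + a) = a := by module
    rw [h]; module
  obtain ⟨c, hc⟩ := SPBA.exists_noncol hdim hab
  have hc' : ¬ Collinear ℝ ({Q a, Q b, Q c} : Set F) := fun h =>
    hc ((SPBA.col_iff Q hQ hseg a b c).2 h)
  have hac : a ≠ c := by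
    intro h
    apply hc
    apply SPBA.col_sub_pair (a := a) (b := b)
    intro x hx
    simp only [Set.mem_insert_iff, Set.mem_singleton_iff] at hx ⊢
    rcases hx with rfl | rfl | rfl
    · exact Or.inl rfl
    · exact Or.inr rfl
    · exact Or.inl h.symm
  have hbc : b ≠ c := by
    intro h
    apply hc
    apply SPBA.col_sub_pair (a := a) (b := b)
    intro x hx
    simp only [Set.mem_insert_iff, Set.mem_singleton_iff] at hx ⊢
    rcases hx with rfl | rfl | rfl
    · exact Or.inl rfl
    · exact Or.inr rfl
    · exact Or.inr h.symm
  have hbd : b ≠ a + b - c := fun h => hac (sub_eq_zero.1 (by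
    rw [show a - c = (a + b - c) - b from by abel, ← h]; simp))
  have had : a ≠ a + b - c := fun h => hbc (sub_eq_zero.1 (by
    rw [show b - c = (a + b - c) - a from by abel, ← h]; simp))
  have hq : Collinear ℝ ({a, b, (1/2 : ℝ) • (a + b)} : Set E) :=
    SPBA.col_of_param (t := 1/2) (by module)
  have hqc : (1/2 : ℝ) • (a + b) ≠ c := fun h => hc (h ▸ hq)
  have hcd : Collinear ℝ ({c, (1/2 : ℝ) • (a + b), a + b - c} : Set E) :=
    SPBA.col_of_param (t := 2) (by module)
  have hQab : Q a ≠ Q b := fun h => hab (hQ.injective h)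
  obtain ⟨r, hr⟩ := SPBA.param_of_col hQab ((SPBA.col_iff Q hQ hseg a b _).1 hq)
  have hQcq : Q c ≠ Q ((1/2 : ℝ) • (a + b)) := fun h => hqc (hQ.injective h).symm
  obtain ⟨u, hu⟩ := SPBA.param_of_col hQcq ((SPBA.col_iff Q hQ hseg c _ _).1 hcd)
  have hQd : Q (a + b - c) = Q a + (u * r) • (Q b - Q a) + (1 - u) • (Q c - Q a) := by
    rw [hu, hr]; module
  -- first parallel pair forces u * r = 1
  have hx : u * r = 1 := by
    by_contra hx1
    have hne : (1 : ℝ) - u * r ≠ 0 := fun h => hx1 (by linarith)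
    have key : Q a + ((1 / (1 - u * r)) * (1 - u)) • (Q c - Q a) =
        Q b + (1 / (1 - u * r)) •
          ((Q a + (u * r) • (Q b - Q a) + (1 - u) • (Q c - Q a)) - Q b) := by
      match_scalars <;> (field_simp; try ring)
    obtain ⟨z, hz⟩ := hQ.surjective (Q a + ((1 / (1 - u * r)) * (1 - u)) • (Q c - Q a))
    have hcol1 : Collinear ℝ ({a, c, z} : Set E) :=
      (SPBA.col_iff Q hQ hseg a c z).2 (SPBA.col_of_param hz)
    have hz2 : Q z = Q b + (1 / (1 - u * r)) • (Q (a + b - c) - Q b) := by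
      rw [hQd]; exact hz.trans key
    have hcol2 : Collinear ℝ ({b, a + b - c, z} : Set E) :=
      (SPBA.col_iff Q hQ hseg b (a + b - c) z).2 (SPBA.col_of_param hz2)
    obtain ⟨s₁, hs₁⟩ := SPBA.param_of_col hac hcol1
    obtain ⟨t₁, ht₁⟩ := SPBA.param_of_col hbd hcol2
    have heq2 := hs₁.symm.trans ht₁
    have hzz : (-1 : ℝ) • (b - a) + (s₁ + t₁) • (c - a) = 0 := by
      linear_combination (norm := module) heq2
    have h10 := (SPBA.indep hc hzz).1
    norm_num at h10
  -- second parallel pair forces u * r + (1 - u) = 0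
  have hy : u * r + (1 - u) = 0 := by
    by_contra hx2
    have hne : u * r + (1 - u) ≠ 0 := hx2
    have key : Q b + ((1 / (u * r + (1 - u))) * (1 - u)) • (Q c - Q b) =
        Q a + (1 / (u * r + (1 - u))) •
          ((Q a + (u * r) • (Q b - Q a) + (1 - u) • (Q c - Q a)) - Q a) := by
      match_scalars <;> (field_simp; try ring)
    obtain ⟨z, hz⟩ := hQ.surjective (Q b + ((1 / (u * r + (1 - u))) * (1 - u)) • (Q c - Q b))
    have hcol1 : Collinear ℝ ({b, c, z} : Set E) :=
      (SPBA.col_iff Q hQ hseg b c z).2 (SPBA.col_of_param hz)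
    have hz2 : Q z = Q a + (1 / (u * r + (1 - u))) • (Q (a + b - c) - Q a) := by
      rw [hQd]; exact hz.trans key
    have hcol2 : Collinear ℝ ({a, a + b - c, z} : Set E) :=
      (SPBA.col_iff Q hQ hseg a (a + b - c) z).2 (SPBA.col_of_param hz2)
    obtain ⟨s₁, hs₁⟩ := SPBA.param_of_col hbc hcol1
    obtain ⟨t₁, ht₁⟩ := SPBA.param_of_col had hcol2
    have heq2 := hs₁.symm.trans ht₁
    have hzz : (1 - (s₁ + t₁)) • (b - a) + (s₁ + t₁) • (c - a) = 0 := by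
      linear_combination (norm := module) heq2
    obtain ⟨e1, e2⟩ := SPBA.indep hc hzz
    rw [e2] at e1
    norm_num at e1
  have hQd' : Q (a + b - c) = Q a + Q b - Q c := by
    rw [hQd, hx, show (1 - u : ℝ) = -1 from by linarith]
    module
  -- the midpoint is on both diagonals
  have hm1 : (1/2 : ℝ) • (a + b) ∈ segment ℝ a b :=
    ⟨1/2, 1/2, by norm_num, by norm_num, by norm_num, by module⟩
  have hm2 : (1/2 : ℝ) • (a + b) ∈ segment ℝ c (a + b - c) :=
    ⟨1/2, 1/2, by norm_num, by norm_num, by norm_num, by module⟩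
  have hM1 := (SPBA.mem_seg_iff Q hQ hseg).1 hm1
  have hM2 := (SPBA.mem_seg_iff Q hQ hseg).1 hm2
  obtain ⟨t₁, ht₁⟩ := SPBA.seg_param hM1
  obtain ⟨s₁, hs₁⟩ := SPBA.seg_param hM2
  rw [hQd'] at hs₁
  have hkey : (t₁ - s₁) • (Q b - Q a) + (2 * s₁ - 1) • (Q c - Q a) = 0 := by
    linear_combination (norm := module) ht₁.symm.trans hs₁
  obtain ⟨e1, e2⟩ := SPBA.indep hc' hkey
  rw [ht₁, show t₁ = 1/2 from by linarith]
  module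

end SPBAHelpers

theorem segment_preserving_bijection_affine
    {Z Z' : Type*} [AddCommGroup Z] [Module ℝ Z] [AddCommGroup Z'] [Module ℝ Z']
    (hdim : 2 ≤ Module.rank ℝ Z)
    (Q : Z → Z') (hQ : Function.Bijective Q)
    (hseg : ∀ z₁ z₂ : Z, ∃ w₁ w₂ : Z', Q '' segment ℝ z₁ z₂ = segment ℝ w₁ w₂) :
    ∀ (z₁ z₂ : Z) (s : ℝ), 0 ≤ s → s ≤ 1 →
      Q (s • z₁ + (1 - s) • z₂) = s • Q z₁ + (1 - s) • Q z₂ := by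
  intro z₁ z₂ s hs0 hs1
  have hhalf := SPBA.half_image Q hdim hQ hseg
  set R : Z → Z' := fun x => Q x - Q 0 with hRdef
  have hR0 : R 0 = 0 := by simp only [hRdef, sub_self]
  have hadd : ∀ x y : Z, R (x + y) = R x + R y := by
    intro x y
    have h1 : ∀ u : Z, R ((1/2 : ℝ) • u) = (1/2 : ℝ) • R u := by
      intro u
      have h := hhalf u 0
      rw [add_zero] at h
      simp only [hRdef]
      rw [h]; module
    have h2 : R ((1/2 : ℝ) • (x + y)) = (1/2 : ℝ) • (R x + R y) := by
      have h := hhalf x y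
      simp only [hRdef]
      rw [h]; module
    have h3 := (h1 (x + y)).symm.trans h2
    exact smul_right_injective Z' (by norm_num : (1/2 : ℝ) ≠ 0) h3
  have hnat : ∀ (n : ℕ) (x : Z), R ((n : ℝ) • x) = (n : ℝ) • R x := by
    intro n
    induction n with
    | zero => intro x; simp only [Nat.cast_zero, zero_smul, hR0]
    | succ n ih =>
      intro x
      push_cast
      rw [add_smul, one_smul, add_smul, one_smul, hadd, ih]
  have hrat : ∀ (q : ℚ) (x : Z), 0 ≤ q → R ((q : ℝ) • x) = (q : ℝ) • R x := by
    intro q x hq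
    have hden : ((q.den : ℝ)) ≠ 0 := Nat.cast_ne_zero.2 q.den_nz
    have hqr : (q : ℝ) = (q.num.toNat : ℝ) / (q.den : ℝ) := by
      rw [Rat.cast_def]
      congr 1
      exact_mod_cast (Int.toNat_of_nonneg (Rat.num_nonneg.2 hq)).symm
    have hmul : (q.den : ℝ) * (q : ℝ) = (q.num.toNat : ℝ) := by
      rw [hqr]; field_simp
    have h1 : (q.den : ℝ) • R ((q : ℝ) • x) = (q.den : ℝ) • ((q : ℝ) • R x) :=
      calc (q.den : ℝ) • R ((q : ℝ) • x) = R ((q.den : ℝ) • ((q : ℝ) • x)) := (hnat _ _).symm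
        _ = R ((q.num.toNat : ℝ) • x) := by rw [smul_smul, hmul]
        _ = (q.num.toNat : ℝ) • R x := hnat _ _
        _ = (q.den : ℝ) • ((q : ℝ) • R x) := by rw [smul_smul, hmul]
    exact smul_right_injective Z' hden h1
  have hRne : ∀ x : Z, x ≠ 0 → R x ≠ 0 := by
    intro x hx h
    simp only [hRdef, sub_eq_zero] at h
    exact hx (hQ.injective h)
  have hsegp : ∀ t : ℝ, 0 ≤ t → t ≤ 1 → ∀ x : Z,
      ∃ v : ℝ, 0 ≤ v ∧ v ≤ 1 ∧ R (t • x) = v • R x := by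
    intro t ht0 ht1 x
    have hmem : t • x ∈ segment ℝ (0 : Z) x :=
      ⟨1 - t, t, by linarith, ht0, by ring, by module⟩
    have h := (SPBA.mem_seg_iff Q hQ hseg).1 hmem
    obtain ⟨p, v, hp, hv, hpv, heq⟩ := h
    refine ⟨v, hv, by linarith, ?_⟩
    simp only [hRdef]
    rw [← heq, show p = 1 - v from by linarith]
    module
  have hhom : ∀ t : ℝ, 0 ≤ t → t ≤ 1 → ∀ x : Z, R (t • x) = t • R x := by
    intro t ht0 ht1 x
    rcases eq_or_ne x 0 with rfl | hx
    · rw [smul_zero, hR0, smul_zero]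
    obtain ⟨v, hv0, hv1, hveq⟩ := hsegp t ht0 ht1 x
    have hvt : v = t := by
      have hle : v ≤ t := by
        by_contra hlt
        push_neg at hlt
        obtain ⟨qq, hq1, hq2⟩ := exists_rat_btwn hlt
        have hq0 : (0 : ℝ) ≤ (qq : ℝ) := le_trans ht0 (le_of_lt hq1)
        obtain ⟨v', hv'0, hv'1, hv'eq⟩ := hsegp ((qq : ℝ) - t) (by linarith)
          (by linarith) x
        have hsplit : R ((qq : ℝ) • x) = R (((qq : ℝ) - t) • x) + R (t • x) := by
          rw [← hadd]
          congr 1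
          module
        rw [hrat qq x (by exact_mod_cast hq0), hv'eq, hveq] at hsplit
        have hz : ((qq : ℝ) - v' - v) • R x = 0 := by
          linear_combination (norm := module) hsplit
        have h0 := (smul_eq_zero.1 hz).resolve_right (hRne x hx)
        linarith
      have hge : t ≤ v := by
        by_contra hlt
        push_neg at hlt
        obtain ⟨qq, hq1, hq2⟩ := exists_rat_btwn hlt
        have hq0 : (0 : ℝ) ≤ (qq : ℝ) := le_trans hv0 (le_of_lt hq1)
        obtain ⟨v', hv'0, hv'1, hv'eq⟩ := hsegp (t - (qq : ℝ)) (by linarith)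
          (by linarith) x
        have hsplit : R (t • x) = R ((t - (qq : ℝ)) • x) + R ((qq : ℝ) • x) := by
          rw [← hadd]
          congr 1
          module
        rw [hveq, hv'eq, hrat qq x (by exact_mod_cast hq0)] at hsplit
        have hz : (v - v' - (qq : ℝ)) • R x = 0 := by
          linear_combination (norm := module) hsplit
        have h0 := (smul_eq_zero.1 hz).resolve_right (hRne x hx)
        linarith
      linarith
    rw [hveq, hvt]
  have h1 : R (s • z₁ + (1 - s) • z₂) = s • R z₁ + (1 - s) • R z₂ := by
    rw [hadd, hhom s hs0 hs1 z₁, hhom (1 - s) (by linarith) (by linarith) z₂]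
  simp only [hRdef] at h1
  linear_combination (norm := module) h1
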